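/- Let X = Σ_{k=1}^r d_k h_k a_{τ_k}^T with the τ_k ∈ [0,1) pairwise distinct, all d_k ≠ 0, all h_k ≠ 0, and r ≤ min(n1, n2). Then the vectorized Hankel matrix H(X) has rank exactly r. -/

import Mathlib

open Complex Matrix

def vhl (s n n1 n2 : ℕ) (hn : n1 + n2 = n + 1) (X : Matrix (Fin s) (Fin n) ℂ) :
    Matrix (Fin s × Fin n1) (Fin n2) ℂ :=
  fun pi j => X pi.1 ⟨pi.2.1 + j.1, by have h1 := pi.2.2; have h2 := j.2; omega⟩

noncomputable def aVec (n : ℕ) (τ : ℝ) : Fin n → ℂ :=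
  fun j => Complex.exp (-2 * Real.pi * Complex.I * τ * j)

lemma vand_coeffs_zero {r : ℕ} {z : Fin r → ℂ} (hz : Function.Injective z)
    {b : Fin r → ℂ} (hb : ∀ j : Fin r, ∑ k, b k * z k ^ (j : ℕ) = 0) : b = 0 := by
  have hdet : (Matrix.vandermonde z).det ≠ 0 :=
    Matrix.det_vandermonde_ne_zero_iff.mpr hz
  have h1 : b ᵥ* Matrix.vandermonde z = 0 := by
    funext j
    simpa [Matrix.vecMul, Matrix.vandermonde, dotProduct] using hb j
  have h2 := congrArg (fun v => v ᵥ* (Matrix.vandermonde z)⁻¹) h1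
  simpa [Matrix.vecMul_vecMul,
    Matrix.mul_nonsing_inv _ (isUnit_iff_ne_zero.mpr hdet)] using h2

theorem stmt2 (s n n1 n2 r : ℕ) (hn : n1 + n2 = n + 1)
    (d : Fin r → ℂ) (h : Fin r → Fin s → ℂ) (τ : Fin r → ℝ)
    (hd : ∀ k, d k ≠ 0) (hh : ∀ k, h k ≠ 0)
    (hτ : ∀ k, τ k ∈ Set.Ico (0 : ℝ) 1)
    (hdist : Function.Injective τ)
    (hr : r ≤ min n1 n2)
    (X : Matrix (Fin s) (Fin n) ℂ)
    (hX : X = ∑ k : Fin r, Matrix.vecMulVec (fun p => d k * h k p) (aVec n (τ k))) :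
    (vhl s n n1 n2 hn X).rank = r := by
  have hr1 : r ≤ n1 := le_trans hr (min_le_left _ _)
  have hr2 : r ≤ n2 := le_trans hr (min_le_right _ _)
  set z : Fin r → ℂ := fun k => Complex.exp (-2 * Real.pi * Complex.I * (τ k)) with hz_def
  -- injectivity of the nodes
  have hzinj : Function.Injective z := by
    intro k k' hkk
    obtain ⟨m, hm⟩ := Complex.exp_eq_exp_iff_exists_int.mp hkk
    have hπ : (Real.pi : ℂ) ≠ 0 := by exact_mod_cast Real.pi_ne_zero
    have hfac : (-2 * (Real.pi : ℂ) * Complex.I) ≠ 0 := by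
      simp [hπ, Complex.I_ne_zero]
    have h2 : (-2 * (Real.pi : ℂ) * Complex.I) * ((τ k : ℂ) - τ k' + m) = 0 := by
      linear_combination hm
    have h3 : ((τ k - τ k' + m : ℝ) : ℂ) = 0 := by
      rcases mul_eq_zero.mp h2 with hcase | hcase
      · exact absurd hcase hfac
      · push_cast; linear_combination hcase
    have h4 : τ k - τ k' + (m : ℝ) = 0 := by exact_mod_cast h3
    have hk1 := hτ k
    have hk2 := hτ k'
    simp only [Set.mem_Ico] at hk1 hk2
    have hm0 : m = 0 := by
      have hlt1 : ((-1 : ℤ) : ℝ) < (m : ℝ) := by push_cast; linarith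
      have hlt2 : (m : ℝ) < ((1 : ℤ) : ℝ) := by push_cast; linarith
      have e1 : (-1 : ℤ) < m := by exact_mod_cast hlt1
      have e2 : m < (1 : ℤ) := by exact_mod_cast hlt2
      omega
    apply hdist
    rw [hm0] at h4
    push_cast at h4
    linarith
  -- factorization
  set A : Matrix (Fin s × Fin n1) (Fin r) ℂ :=
    fun pi k => d k * h k pi.1 * z k ^ (pi.2 : ℕ) with hA_def
  set B : Matrix (Fin r) (Fin n2) ℂ := fun k j => z k ^ (j : ℕ) with hB_def
  have hpow : ∀ (k : Fin r) (m : ℕ),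
      Complex.exp (-2 * Real.pi * Complex.I * (τ k) * m) = z k ^ m := by
    intro k m
    rw [hz_def]
    rw [← Complex.exp_nat_mul]
    ring_nf
  have hAB : vhl s n n1 n2 hn X = A * B := by
    funext pi j
    simp only [vhl, hX, Matrix.mul_apply, Matrix.sum_apply, Matrix.vecMulVec_apply,
      aVec, hA_def, hB_def]
    apply Finset.sum_congr rfl
    intro k _
    have := hpow k (pi.2.1 + j.1)
    push_cast at this ⊢
    rw [this, pow_add]
    ring
  set C : Matrix (Fin n2) (Fin r) ℂ :=
    fun j l => if j = Fin.castLE hr2 l then 1 else 0 with hC_def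
  have hBC : B * C = Matrix.vandermonde z := by
    funext k l
    rw [Matrix.mul_apply]
    simp [Matrix.mul_apply, hB_def, hC_def, Matrix.vandermonde, Finset.sum_ite_eq']
  -- injectivity of A at zero
  have hAzero : ∀ w : Fin r → ℂ, A *ᵥ w = 0 → w = 0 := by
    intro w hw
    funext k
    obtain ⟨p, hp⟩ := Function.ne_iff.mp (hh k)
    have hb : ∀ j : Fin r, ∑ k', (d k' * h k' p * w k') * z k' ^ (j : ℕ) = 0 := by
      intro j
      have := congrFun hw (p, Fin.castLE hr1 j)
      simp only [Matrix.mulVec, dotProduct, hA_def, Pi.zero_apply] at this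
      rw [← this]
      apply Finset.sum_congr rfl
      intro k' _
      simp [Fin.castLE]
      ring
    have hz0 := vand_coeffs_zero hzinj hb
    have := congrFun hz0 k
    simp only [Pi.zero_apply] at this
    rcases mul_eq_zero.mp this with h1 | h1
    · rcases mul_eq_zero.mp h1 with h2 | h2
      · exact absurd h2 (hd k)
      · exact absurd h2 hp
    · exact h1
  -- invertibility of the vandermonde matrix
  have hdet : IsUnit (Matrix.vandermonde z).det :=
    isUnit_iff_ne_zero.mpr (Matrix.det_vandermonde_ne_zero_iff.mpr hzinj)
  have hVzero : ∀ c : Fin r → ℂ, (Matrix.vandermonde z) *ᵥ c = 0 → c = 0 := by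
    intro c hc
    have h2 := congrArg (fun v => (Matrix.vandermonde z)⁻¹ *ᵥ v) hc
    simpa [Matrix.mulVec_mulVec, Matrix.nonsing_inv_mul _ hdet] using h2
  -- rank of A * vandermonde
  have hinj : Function.Injective (A * Matrix.vandermonde z).mulVecLin := by
    rw [injective_iff_map_eq_zero]
    intro c hc
    simp only [Matrix.mulVecLin_apply] at hc
    rw [← Matrix.mulVec_mulVec] at hc
    exact hVzero c (hAzero _ hc)
  have hrankAV : (A * Matrix.vandermonde z).rank = r := by
    rw [Matrix.rank, LinearMap.finrank_range_of_inj hinj]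
    simp [Module.finrank_pi]
  have hupper : (A * B).rank ≤ r := by
    refine le_trans (Matrix.rank_mul_le_left A B) ?_
    simpa using Matrix.rank_le_card_width A
  have hlower : r ≤ (A * B).rank := by
    have hAV : (A * B) * C = A * Matrix.vandermonde z := by
      rw [Matrix.mul_assoc, hBC]
    calc r = ((A * B) * C).rank := by rw [hAV, hrankAV]
      _ ≤ (A * B).rank := Matrix.rank_mul_le_left _ _
  rw [hAB]
  omega
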